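/- Let n ≥ 2, μ₁,…,μ_{n+2} ∈ ℝ, S = ∑ μ_k. Define A = ∑ over disjoint pairs {i,j},{k,l} of (μ_i+μ_j)(μ_k+μ_l) (each unordered pair of disjoint 2-subsets counted once) and B = ∑_{i<j<k} (μ_i+μ_j+μ_k)². Then A + B = C(n+1,2)·S². -/
import Mathlib

open Finset

private lemma sum_ite_ne1 {m : ℕ} (v : Fin m → ℝ) (i : Fin m) :
    (∑ k, if k ≠ i then v k else 0) = (∑ k, v k) - v i := by
  have h : ∀ k : Fin m, (if k ≠ i then v k else 0) = v k - (if k = i then v k else 0) := by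
    intro k; by_cases h : k = i <;> simp [h]
  rw [Finset.sum_congr rfl fun k _ => h k, Finset.sum_sub_distrib, Finset.sum_ite_eq']
  simp

private lemma sum_ite_ne2 {m : ℕ} (v : Fin m → ℝ) {i j : Fin m} (hij : i ≠ j) :
    (∑ k, if k ≠ i ∧ k ≠ j then v k else 0) = (∑ k, v k) - v i - v j := by
  have h : ∀ k : Fin m, (if k ≠ i ∧ k ≠ j then v k else 0)
      = (if k ≠ j then v k else 0) - (if k = i then v k else 0) := by
    intro k
    by_cases h1 : k = i
    · subst h1; simp [hij]
    · simp [h1]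
  rw [Finset.sum_congr rfl fun k _ => h k, Finset.sum_sub_distrib, Finset.sum_ite_eq',
    sum_ite_ne1]
  simp; ring

private lemma sum_ite_ne3 {m : ℕ} (v : Fin m → ℝ) {i j k : Fin m}
    (hij : i ≠ j) (hik : i ≠ k) (hjk : j ≠ k) :
    (∑ l, if l ≠ i ∧ l ≠ j ∧ l ≠ k then v l else 0)
      = (∑ l, v l) - v i - v j - v k := by
  have h : ∀ l : Fin m, (if l ≠ i ∧ l ≠ j ∧ l ≠ k then v l else 0)
      = (if l ≠ j ∧ l ≠ k then v l else 0) - (if l = i then v l else 0) := by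
    intro l
    by_cases h1 : l = i
    · subst h1; simp [hij, hik]
    · simp [h1]
  rw [Finset.sum_congr rfl fun l _ => h l, Finset.sum_sub_distrib, Finset.sum_ite_eq',
    sum_ite_ne2 v hjk]
  simp; ring

private lemma sum_ite_pull {m : ℕ} (c : Prop) [Decidable c] (w : Fin m → ℝ) :
    (∑ l, if c then w l else 0) = if c then (∑ l, w l) else 0 := by
  split_ifs <;> simp

private lemma halve {β : Type*} [Fintype β] [DecidableEq β] {M : ℕ}
    (P : β → Prop) [DecidablePred P] (a b : β → Fin M) (e : β → β) (f : β → ℝ)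
    (hee : ∀ x, e (e x) = x) (hab : ∀ x, a (e x) = b x) (hba : ∀ x, b (e x) = a x)
    (hP : ∀ x, P x → P (e x)) (hf : ∀ x, f (e x) = f x) :
    (∑ x ∈ univ.filter (fun x => P x ∧ a x ≠ b x), f x)
      = 2 * ∑ x ∈ univ.filter (fun x => P x ∧ a x < b x), f x := by
  have hsplit : univ.filter (fun x => P x ∧ a x ≠ b x)
      = univ.filter (fun x => P x ∧ a x < b x) ∪ univ.filter (fun x => P x ∧ b x < a x) := by
    ext x
    simp only [mem_filter, mem_union, mem_univ, true_and]
    constructor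
    · rintro ⟨hp, hne⟩
      rcases lt_or_gt_of_ne hne with h | h
      · exact Or.inl ⟨hp, h⟩
      · exact Or.inr ⟨hp, h⟩
    · rintro (⟨hp, h⟩ | ⟨hp, h⟩)
      · exact ⟨hp, ne_of_lt h⟩
      · exact ⟨hp, ne_of_gt h⟩
  have hdisj : Disjoint (univ.filter (fun x => P x ∧ a x < b x))
      (univ.filter (fun x => P x ∧ b x < a x)) := by
    rw [Finset.disjoint_left]
    intro x hx hx'
    simp only [mem_filter] at hx hx'
    exact absurd hx'.2.2 (not_lt_of_gt hx.2.2)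
  have hswap : ∑ x ∈ univ.filter (fun x => P x ∧ b x < a x), f x
      = ∑ x ∈ univ.filter (fun x => P x ∧ a x < b x), f x := by
    refine Finset.sum_nbij' e e ?_ ?_ ?_ ?_ ?_
    · intro x hx; simp only [mem_filter, mem_univ, true_and] at *
      exact ⟨hP x hx.1, by rw [hab, hba]; exact hx.2⟩
    · intro x hx; simp only [mem_filter, mem_univ, true_and] at *
      exact ⟨hP x hx.1, by rw [hab, hba]; exact hx.2⟩
    · intro x _; exact hee x
    · intro x _; exact hee x
    · intro x _; exact (hf x).symm
  rw [hsplit, Finset.sum_union hdisj, hswap]; ring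

/-- With `A` the sum of `(μ_i+μ_j)(μ_k+μ_l)` over unordered pairs of disjoint
2-element subsets `{i,j}, {k,l}` (each counted once, via `i<j`, `k<l`, disjoint, `i<k`)
and `B = ∑_{i<j<k} (μ_i+μ_j+μ_k)²`, one has `A + B = C(n+1,2)·S²` where `S = ∑ μ_k`. -/
theorem stmt_4 (n : ℕ) (hn : 2 ≤ n) (μ : Fin (n + 2) → ℝ) (S : ℝ)
    (hS : S = ∑ k, μ k)
    (A B : ℝ)
    (hA : A = ∑ p ∈ Finset.univ.filter
        (fun p : Fin (n + 2) × Fin (n + 2) × Fin (n + 2) × Fin (n + 2) =>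
          p.1 < p.2.1 ∧ p.2.2.1 < p.2.2.2 ∧
          p.1 ≠ p.2.2.1 ∧ p.1 ≠ p.2.2.2 ∧ p.2.1 ≠ p.2.2.1 ∧ p.2.1 ≠ p.2.2.2 ∧
          p.1 < p.2.2.1),
        (μ p.1 + μ p.2.1) * (μ p.2.2.1 + μ p.2.2.2))
    (hB : B = ∑ p ∈ Finset.univ.filter
        (fun p : Fin (n + 2) × Fin (n + 2) × Fin (n + 2) =>
          p.1 < p.2.1 ∧ p.2.1 < p.2.2),
        (μ p.1 + μ p.2.1 + μ p.2.2) ^ 2) :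
    A + B = ((n + 1).choose 2 : ℝ) * S ^ 2 := by
  obtain ⟨Q, hQ⟩ : ∃ q : ℝ, q = ∑ k : Fin (n+2), (μ k)^2 := ⟨_, rfl⟩
  obtain ⟨m', hm'⟩ : ∃ x : ℝ, x = (n : ℝ) + 2 := ⟨_, rfl⟩
  have key : ∀ aa bb cc : ℝ,
      (∑ k : Fin (n+2), (aa * (μ k)^2 + bb * μ k + cc)) = aa * Q + bb * S + cc * m' := by
    intro aa bb cc
    rw [Finset.sum_add_distrib, Finset.sum_add_distrib, ← Finset.mul_sum, ← Finset.mul_sum,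
      Finset.sum_const, Finset.card_univ, Fintype.card_fin, ← hQ, ← hS, hm', nsmul_eq_mul]
    push_cast
    ring
  have flat3 : ∀ g : Fin (n+2) × Fin (n+2) × Fin (n+2) → ℝ,
      (∑ p, g p) = ∑ i, ∑ j, ∑ k, g (i, j, k) := by
    intro g
    rw [Fintype.sum_prod_type]
    exact Finset.sum_congr rfl fun i _ => Fintype.sum_prod_type _
  have flat4 : ∀ g : Fin (n+2) × Fin (n+2) × Fin (n+2) × Fin (n+2) → ℝ,
      (∑ p, g p) = ∑ i, ∑ j, ∑ k, ∑ l, g (i, j, k, l) := by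
    intro g
    rw [Fintype.sum_prod_type]
    exact Finset.sum_congr rfl fun i _ => flat3 _
  -- ===== A chain: symmetrize to fully distinct 4-tuples (= 8A) =====
  have s3 : (∑ p ∈ (univ : Finset (Fin (n+2) × Fin (n+2) × Fin (n+2) × Fin (n+2))).filter
        (fun p => (p.2.2.1 ≠ p.2.2.2 ∧ p.1 ≠ p.2.2.1 ∧ p.1 ≠ p.2.2.2 ∧ p.2.1 ≠ p.2.2.1 ∧
          p.2.1 ≠ p.2.2.2) ∧ p.1 ≠ p.2.1),
        (μ p.1 + μ p.2.1) * (μ p.2.2.1 + μ p.2.2.2))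
      = 2 * ∑ p ∈ (univ : Finset (Fin (n+2) × Fin (n+2) × Fin (n+2) × Fin (n+2))).filter
        (fun p => (p.2.2.1 ≠ p.2.2.2 ∧ p.1 ≠ p.2.2.1 ∧ p.1 ≠ p.2.2.2 ∧ p.2.1 ≠ p.2.2.1 ∧
          p.2.1 ≠ p.2.2.2) ∧ p.1 < p.2.1),
        (μ p.1 + μ p.2.1) * (μ p.2.2.1 + μ p.2.2.2) :=
    halve (fun p => p.2.2.1 ≠ p.2.2.2 ∧ p.1 ≠ p.2.2.1 ∧ p.1 ≠ p.2.2.2 ∧ p.2.1 ≠ p.2.2.1 ∧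
          p.2.1 ≠ p.2.2.2)
      (fun p => p.1) (fun p => p.2.1) (fun p => (p.2.1, p.1, p.2.2.1, p.2.2.2))
      (fun p => (μ p.1 + μ p.2.1) * (μ p.2.2.1 + μ p.2.2.2))
      (fun x => rfl) (fun x => rfl) (fun x => rfl)
      (fun x hx => ⟨hx.1, hx.2.2.2.1, hx.2.2.2.2, hx.2.1, hx.2.2.1⟩)
      (fun x => by
        show (μ x.2.1 + μ x.1) * (μ x.2.2.1 + μ x.2.2.2)
          = (μ x.1 + μ x.2.1) * (μ x.2.2.1 + μ x.2.2.2)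
        ring)
  have r2 : (∑ p ∈ (univ : Finset (Fin (n+2) × Fin (n+2) × Fin (n+2) × Fin (n+2))).filter
        (fun p => (p.2.2.1 ≠ p.2.2.2 ∧ p.1 ≠ p.2.2.1 ∧ p.1 ≠ p.2.2.2 ∧ p.2.1 ≠ p.2.2.1 ∧
          p.2.1 ≠ p.2.2.2) ∧ p.1 < p.2.1),
        (μ p.1 + μ p.2.1) * (μ p.2.2.1 + μ p.2.2.2))
      = ∑ p ∈ (univ : Finset (Fin (n+2) × Fin (n+2) × Fin (n+2) × Fin (n+2))).filter
        (fun p => (p.1 < p.2.1 ∧ p.1 ≠ p.2.2.1 ∧ p.1 ≠ p.2.2.2 ∧ p.2.1 ≠ p.2.2.1 ∧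
          p.2.1 ≠ p.2.2.2) ∧ p.2.2.1 ≠ p.2.2.2),
        (μ p.1 + μ p.2.1) * (μ p.2.2.1 + μ p.2.2.2) :=
    Finset.sum_congr (by
      ext p
      simp only [mem_filter, mem_univ, true_and, ne_eq, Fin.lt_def, Fin.ext_iff]
      omega) (fun _ _ => rfl)
  have s2 : (∑ p ∈ (univ : Finset (Fin (n+2) × Fin (n+2) × Fin (n+2) × Fin (n+2))).filter
        (fun p => (p.1 < p.2.1 ∧ p.1 ≠ p.2.2.1 ∧ p.1 ≠ p.2.2.2 ∧ p.2.1 ≠ p.2.2.1 ∧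
          p.2.1 ≠ p.2.2.2) ∧ p.2.2.1 ≠ p.2.2.2),
        (μ p.1 + μ p.2.1) * (μ p.2.2.1 + μ p.2.2.2))
      = 2 * ∑ p ∈ (univ : Finset (Fin (n+2) × Fin (n+2) × Fin (n+2) × Fin (n+2))).filter
        (fun p => (p.1 < p.2.1 ∧ p.1 ≠ p.2.2.1 ∧ p.1 ≠ p.2.2.2 ∧ p.2.1 ≠ p.2.2.1 ∧
          p.2.1 ≠ p.2.2.2) ∧ p.2.2.1 < p.2.2.2),
        (μ p.1 + μ p.2.1) * (μ p.2.2.1 + μ p.2.2.2) :=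
    halve (fun p => p.1 < p.2.1 ∧ p.1 ≠ p.2.2.1 ∧ p.1 ≠ p.2.2.2 ∧ p.2.1 ≠ p.2.2.1 ∧
          p.2.1 ≠ p.2.2.2)
      (fun p => p.2.2.1) (fun p => p.2.2.2) (fun p => (p.1, p.2.1, p.2.2.2, p.2.2.1))
      (fun p => (μ p.1 + μ p.2.1) * (μ p.2.2.1 + μ p.2.2.2))
      (fun x => rfl) (fun x => rfl) (fun x => rfl)
      (fun x hx => ⟨hx.1, hx.2.2.1, hx.2.1, hx.2.2.2.2, hx.2.2.2.1⟩)
      (fun x => by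
        show (μ x.1 + μ x.2.1) * (μ x.2.2.2 + μ x.2.2.1)
          = (μ x.1 + μ x.2.1) * (μ x.2.2.1 + μ x.2.2.2)
        ring)
  have r1 : (∑ p ∈ (univ : Finset (Fin (n+2) × Fin (n+2) × Fin (n+2) × Fin (n+2))).filter
        (fun p => (p.1 < p.2.1 ∧ p.1 ≠ p.2.2.1 ∧ p.1 ≠ p.2.2.2 ∧ p.2.1 ≠ p.2.2.1 ∧
          p.2.1 ≠ p.2.2.2) ∧ p.2.2.1 < p.2.2.2),
        (μ p.1 + μ p.2.1) * (μ p.2.2.1 + μ p.2.2.2))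
      = ∑ p ∈ (univ : Finset (Fin (n+2) × Fin (n+2) × Fin (n+2) × Fin (n+2))).filter
        (fun p => (p.1 < p.2.1 ∧ p.2.2.1 < p.2.2.2 ∧ p.1 ≠ p.2.2.2 ∧ p.2.1 ≠ p.2.2.1 ∧
          p.2.1 ≠ p.2.2.2) ∧ p.1 ≠ p.2.2.1),
        (μ p.1 + μ p.2.1) * (μ p.2.2.1 + μ p.2.2.2) :=
    Finset.sum_congr (by
      ext p
      simp only [mem_filter, mem_univ, true_and, ne_eq, Fin.lt_def, Fin.ext_iff]
      omega) (fun _ _ => rfl)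
  have s1 : (∑ p ∈ (univ : Finset (Fin (n+2) × Fin (n+2) × Fin (n+2) × Fin (n+2))).filter
        (fun p => (p.1 < p.2.1 ∧ p.2.2.1 < p.2.2.2 ∧ p.1 ≠ p.2.2.2 ∧ p.2.1 ≠ p.2.2.1 ∧
          p.2.1 ≠ p.2.2.2) ∧ p.1 ≠ p.2.2.1),
        (μ p.1 + μ p.2.1) * (μ p.2.2.1 + μ p.2.2.2))
      = 2 * ∑ p ∈ (univ : Finset (Fin (n+2) × Fin (n+2) × Fin (n+2) × Fin (n+2))).filter
        (fun p => (p.1 < p.2.1 ∧ p.2.2.1 < p.2.2.2 ∧ p.1 ≠ p.2.2.2 ∧ p.2.1 ≠ p.2.2.1 ∧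
          p.2.1 ≠ p.2.2.2) ∧ p.1 < p.2.2.1),
        (μ p.1 + μ p.2.1) * (μ p.2.2.1 + μ p.2.2.2) :=
    halve (fun p => p.1 < p.2.1 ∧ p.2.2.1 < p.2.2.2 ∧ p.1 ≠ p.2.2.2 ∧ p.2.1 ≠ p.2.2.1 ∧
          p.2.1 ≠ p.2.2.2)
      (fun p => p.1) (fun p => p.2.2.1) (fun p => (p.2.2.1, p.2.2.2, p.1, p.2.1))
      (fun p => (μ p.1 + μ p.2.1) * (μ p.2.2.1 + μ p.2.2.2))
      (fun x => rfl) (fun x => rfl) (fun x => rfl)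
      (fun x hx => ⟨hx.2.1, hx.1, (hx.2.2.2.1).symm, (hx.2.2.1).symm, (hx.2.2.2.2).symm⟩)
      (fun x => by
        show (μ x.2.2.1 + μ x.2.2.2) * (μ x.1 + μ x.2.1)
          = (μ x.1 + μ x.2.1) * (μ x.2.2.1 + μ x.2.2.2)
        ring)
  have r0 : (∑ p ∈ (univ : Finset (Fin (n+2) × Fin (n+2) × Fin (n+2) × Fin (n+2))).filter
        (fun p => (p.1 < p.2.1 ∧ p.2.2.1 < p.2.2.2 ∧ p.1 ≠ p.2.2.2 ∧ p.2.1 ≠ p.2.2.1 ∧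
          p.2.1 ≠ p.2.2.2) ∧ p.1 < p.2.2.1),
        (μ p.1 + μ p.2.1) * (μ p.2.2.1 + μ p.2.2.2)) = A := by
    rw [hA]
    exact Finset.sum_congr (by
      ext p
      simp only [mem_filter, mem_univ, true_and, ne_eq, Fin.lt_def, Fin.ext_iff]
      omega) (fun _ _ => rfl)
  have h8A : (∑ p ∈ (univ : Finset (Fin (n+2) × Fin (n+2) × Fin (n+2) × Fin (n+2))).filter
        (fun p => (p.2.2.1 ≠ p.2.2.2 ∧ p.1 ≠ p.2.2.1 ∧ p.1 ≠ p.2.2.2 ∧ p.2.1 ≠ p.2.2.1 ∧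
          p.2.1 ≠ p.2.2.2) ∧ p.1 ≠ p.2.1),
        (μ p.1 + μ p.2.1) * (μ p.2.2.1 + μ p.2.2.2)) = 8 * A := by
    rw [s3, r2, s2, r1, s1, r0]; ring
  -- ===== B chain: symmetrize to fully distinct triples (= 6B) =====
  have sB : (∑ p ∈ (univ : Finset (Fin (n+2) × Fin (n+2) × Fin (n+2))).filter
        (fun p => (p.2.2 ≠ p.1 ∧ p.2.2 ≠ p.2.1) ∧ p.1 ≠ p.2.1),
        (μ p.1 + μ p.2.1 + μ p.2.2) ^ 2)
      = 2 * ∑ p ∈ (univ : Finset (Fin (n+2) × Fin (n+2) × Fin (n+2))).filter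
        (fun p => (p.2.2 ≠ p.1 ∧ p.2.2 ≠ p.2.1) ∧ p.1 < p.2.1),
        (μ p.1 + μ p.2.1 + μ p.2.2) ^ 2 :=
    halve (fun p => p.2.2 ≠ p.1 ∧ p.2.2 ≠ p.2.1)
      (fun p => p.1) (fun p => p.2.1) (fun p => (p.2.1, p.1, p.2.2))
      (fun p => (μ p.1 + μ p.2.1 + μ p.2.2) ^ 2)
      (fun x => rfl) (fun x => rfl) (fun x => rfl)
      (fun x hx => ⟨hx.2, hx.1⟩)
      (fun x => by
        show (μ x.2.1 + μ x.1 + μ x.2.2) ^ 2 = (μ x.1 + μ x.2.1 + μ x.2.2) ^ 2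
        ring)
  have hBsplit : (univ : Finset (Fin (n+2) × Fin (n+2) × Fin (n+2))).filter
        (fun p => (p.2.2 ≠ p.1 ∧ p.2.2 ≠ p.2.1) ∧ p.1 < p.2.1)
      = ((univ : Finset (Fin (n+2) × Fin (n+2) × Fin (n+2))).filter
          (fun p => p.1 < p.2.1 ∧ p.2.2 < p.1))
        ∪ (((univ : Finset (Fin (n+2) × Fin (n+2) × Fin (n+2))).filter
          (fun p => p.1 < p.2.2 ∧ p.2.2 < p.2.1))
        ∪ ((univ : Finset (Fin (n+2) × Fin (n+2) × Fin (n+2))).filter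
          (fun p => p.1 < p.2.1 ∧ p.2.1 < p.2.2))) := by
    ext p
    simp only [mem_filter, mem_union, mem_univ, true_and, ne_eq, Fin.lt_def, Fin.ext_iff]
    omega
  have d1 : Disjoint ((univ : Finset (Fin (n+2) × Fin (n+2) × Fin (n+2))).filter
        (fun p => p.1 < p.2.1 ∧ p.2.2 < p.1))
      ((((univ : Finset (Fin (n+2) × Fin (n+2) × Fin (n+2))).filter
          (fun p => p.1 < p.2.2 ∧ p.2.2 < p.2.1))
        ∪ ((univ : Finset (Fin (n+2) × Fin (n+2) × Fin (n+2))).filter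
          (fun p => p.1 < p.2.1 ∧ p.2.1 < p.2.2)))) := by
    rw [Finset.disjoint_left]
    intro p hp hq
    simp only [mem_filter, mem_union, mem_univ, true_and, Fin.lt_def] at hp hq
    omega
  have d2 : Disjoint ((univ : Finset (Fin (n+2) × Fin (n+2) × Fin (n+2))).filter
        (fun p => p.1 < p.2.2 ∧ p.2.2 < p.2.1))
      ((univ : Finset (Fin (n+2) × Fin (n+2) × Fin (n+2))).filter
        (fun p => p.1 < p.2.1 ∧ p.2.1 < p.2.2)) := by
    rw [Finset.disjoint_left]
    intro p hp hq
    simp only [mem_filter, mem_univ, true_and, Fin.lt_def] at hp hq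
    omega
  have hf1 : (∑ p ∈ (univ : Finset (Fin (n+2) × Fin (n+2) × Fin (n+2))).filter
        (fun p => p.1 < p.2.1 ∧ p.2.2 < p.1), (μ p.1 + μ p.2.1 + μ p.2.2) ^ 2) = B := by
    rw [hB]
    refine Finset.sum_nbij' (fun p => (p.2.2, p.1, p.2.1)) (fun q => (q.2.1, q.2.2, q.1))
      ?_ ?_ ?_ ?_ ?_
    · intro p hp
      simp only [mem_filter, mem_univ, true_and] at hp ⊢
      exact ⟨hp.2, hp.1⟩
    · intro q hq
      simp only [mem_filter, mem_univ, true_and] at hq ⊢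
      exact ⟨hq.2, hq.1⟩
    · intro p _; rfl
    · intro q _; rfl
    · intro p _
      show (μ p.1 + μ p.2.1 + μ p.2.2) ^ 2 = (μ p.2.2 + μ p.1 + μ p.2.1) ^ 2
      ring
  have hf2 : (∑ p ∈ (univ : Finset (Fin (n+2) × Fin (n+2) × Fin (n+2))).filter
        (fun p => p.1 < p.2.2 ∧ p.2.2 < p.2.1), (μ p.1 + μ p.2.1 + μ p.2.2) ^ 2) = B := by
    rw [hB]
    refine Finset.sum_nbij' (fun p => (p.1, p.2.2, p.2.1)) (fun q => (q.1, q.2.2, q.2.1))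
      ?_ ?_ ?_ ?_ ?_
    · intro p hp
      simp only [mem_filter, mem_univ, true_and] at hp ⊢
      exact ⟨hp.1, hp.2⟩
    · intro q hq
      simp only [mem_filter, mem_univ, true_and] at hq ⊢
      exact ⟨hq.1, hq.2⟩
    · intro p _; rfl
    · intro q _; rfl
    · intro p _
      show (μ p.1 + μ p.2.1 + μ p.2.2) ^ 2 = (μ p.1 + μ p.2.2 + μ p.2.1) ^ 2
      ring
  have hf3 : (∑ p ∈ (univ : Finset (Fin (n+2) × Fin (n+2) × Fin (n+2))).filter
        (fun p => p.1 < p.2.1 ∧ p.2.1 < p.2.2), (μ p.1 + μ p.2.1 + μ p.2.2) ^ 2) = B :=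
    hB.symm
  have h6B : (∑ p ∈ (univ : Finset (Fin (n+2) × Fin (n+2) × Fin (n+2))).filter
        (fun p => (p.2.2 ≠ p.1 ∧ p.2.2 ≠ p.2.1) ∧ p.1 ≠ p.2.1),
        (μ p.1 + μ p.2.1 + μ p.2.2) ^ 2) = 6 * B := by
    rw [sB, hBsplit, Finset.sum_union d1, Finset.sum_union d2, hf1, hf2, hf3]
    ring
  -- ===== evaluate distinct-triple sum =====
  have hstepB : ∀ i j : Fin (n+2),
      (∑ k, if ((k ≠ i ∧ k ≠ j) ∧ i ≠ j) then (μ i + μ j + μ k) ^ 2 else 0)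
      = if j ≠ i then (Q + 2*(μ i + μ j)*S + (μ i + μ j)^2*m'
          - (μ i + μ j + μ i)^2 - (μ i + μ j + μ j)^2) else 0 := by
    intro i j
    by_cases hij : j = i
    · subst hij; simp
    · have hij' : i ≠ j := fun h => hij h.symm
      rw [if_pos hij]
      have hc : ∀ k : Fin (n+2),
          (if ((k ≠ i ∧ k ≠ j) ∧ i ≠ j) then (μ i + μ j + μ k) ^ 2 else 0)
          = (if (k ≠ i ∧ k ≠ j) then (μ i + μ j + μ k) ^ 2 else 0) := by
        intro k
        by_cases hk : k ≠ i ∧ k ≠ j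
        · rw [if_pos ⟨hk, hij'⟩, if_pos hk]
        · rw [if_neg fun h => hk h.1, if_neg hk]
      rw [Finset.sum_congr rfl fun k _ => hc k, sum_ite_ne2 _ hij',
        show (∑ k, (μ i + μ j + μ k) ^ 2)
          = ∑ k : Fin (n+2), ((1:ℝ)*(μ k)^2 + (2*(μ i + μ j))*μ k + (μ i + μ j)^2) from
          Finset.sum_congr rfl fun k _ => by ring,
        key]
      ring
  have hYval : (∑ p ∈ (univ : Finset (Fin (n+2) × Fin (n+2) × Fin (n+2))).filter
        (fun p => (p.2.2 ≠ p.1 ∧ p.2.2 ≠ p.2.1) ∧ p.1 ≠ p.2.1),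
        (μ p.1 + μ p.2.1 + μ p.2.2) ^ 2)
      = (m'^2 - 9*m' + 18)*Q + ((4*m' - 12)*S)*S + ((2*m' - 6)*Q + 2*S^2)*m' := by
    rw [Finset.sum_filter, flat3]
    rw [Finset.sum_congr rfl fun i _ => Finset.sum_congr rfl fun j _ => hstepB i j]
    have step1 : ∀ i : Fin (n+2),
        (∑ j, if j ≠ i then (Q + 2*(μ i + μ j)*S + (μ i + μ j)^2*m'
            - (μ i + μ j + μ i)^2 - (μ i + μ j + μ j)^2) else 0)
        = (m'^2 - 9*m' + 18)*(μ i)^2 + ((4*m' - 12)*S)*(μ i) + ((2*m' - 6)*Q + 2*S^2) := by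
      intro i
      rw [sum_ite_ne1,
        show (∑ j, (Q + 2*(μ i + μ j)*S + (μ i + μ j)^2*m'
            - (μ i + μ j + μ i)^2 - (μ i + μ j + μ j)^2))
          = ∑ j : Fin (n+2), ((m' - 5)*(μ j)^2 + (2*S + (2*m' - 8)*μ i)*μ j
            + (Q + 2*S*μ i + (m' - 5)*(μ i)^2)) from
          Finset.sum_congr rfl fun j _ => by ring,
        key]
      ring
    rw [Finset.sum_congr rfl fun i _ => step1 i, key]
  -- ===== evaluate distinct-4-tuple sum =====
  have hstep4 : ∀ i j : Fin (n+2),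
      (∑ k, ∑ l, if ((k ≠ l ∧ i ≠ k ∧ i ≠ l ∧ j ≠ k ∧ j ≠ l) ∧ i ≠ j)
          then (μ i + μ j) * (μ k + μ l) else 0)
      = if j ≠ i then (2*m' - 6) * ((μ i + μ j) * (S - μ i - μ j)) else 0 := by
    intro i j
    by_cases hij : j = i
    · subst hij; simp
    · have hij' : i ≠ j := fun h => hij h.symm
      rw [if_pos hij]
      have hc : ∀ k l : Fin (n+2),
          (if ((k ≠ l ∧ i ≠ k ∧ i ≠ l ∧ j ≠ k ∧ j ≠ l) ∧ i ≠ j)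
            then (μ i + μ j) * (μ k + μ l) else 0)
          = (if (k ≠ i ∧ k ≠ j) then (if (l ≠ i ∧ l ≠ j ∧ l ≠ k)
              then (μ i + μ j) * (μ k + μ l) else 0) else 0) := by
        intro k l
        by_cases hk : k ≠ i ∧ k ≠ j
        · by_cases hl : l ≠ i ∧ l ≠ j ∧ l ≠ k
          · rw [if_pos ⟨⟨Ne.symm hl.2.2, Ne.symm hk.1, Ne.symm hl.1, Ne.symm hk.2,
              Ne.symm hl.2.1⟩, hij'⟩, if_pos hk, if_pos hl]
          · rw [if_neg, if_pos hk, if_neg hl]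
            rintro ⟨⟨h1, h2, h3, h4, h5⟩, -⟩
            exact hl ⟨Ne.symm h3, Ne.symm h5, Ne.symm h1⟩
        · rw [if_neg, if_neg hk]
          rintro ⟨⟨h1, h2, h3, h4, h5⟩, -⟩
          exact hk ⟨Ne.symm h2, Ne.symm h4⟩
      rw [Finset.sum_congr rfl fun k _ => Finset.sum_congr rfl fun l _ => hc k l]
      rw [Finset.sum_congr rfl fun k (_ : k ∈ univ) => sum_ite_pull (k ≠ i ∧ k ≠ j)
        (fun l => if (l ≠ i ∧ l ≠ j ∧ l ≠ k) then (μ i + μ j) * (μ k + μ l) else 0)]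
      have hI3 : ∀ k : Fin (n+2),
          (if (k ≠ i ∧ k ≠ j) then (∑ l, if (l ≠ i ∧ l ≠ j ∧ l ≠ k)
              then (μ i + μ j) * (μ k + μ l) else 0) else 0)
          = (if (k ≠ i ∧ k ≠ j)
              then ((μ i + μ j) * ((m' - 4) * μ k + (S - μ i - μ j))) else 0) := by
        intro k
        by_cases hk : k ≠ i ∧ k ≠ j
        · rw [if_pos hk, if_pos hk, sum_ite_ne3 _ hij' (Ne.symm hk.1) (Ne.symm hk.2),
            show (∑ l, (μ i + μ j) * (μ k + μ l))
              = ∑ l : Fin (n+2), ((0:ℝ)*(μ l)^2 + (μ i + μ j)*μ l + (μ i + μ j)*μ k) from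
              Finset.sum_congr rfl fun l _ => by ring,
            key]
          ring
        · rw [if_neg hk, if_neg hk]
      rw [Finset.sum_congr rfl fun k _ => hI3 k, sum_ite_ne2 _ hij',
        show (∑ k, (μ i + μ j) * ((m' - 4) * μ k + (S - μ i - μ j)))
          = ∑ k : Fin (n+2), ((0:ℝ)*(μ k)^2 + ((μ i + μ j)*(m' - 4))*μ k
            + ((μ i + μ j)*(S - μ i - μ j))) from
          Finset.sum_congr rfl fun k _ => by ring,
        key]
      ring
  have hDval : (∑ p ∈ (univ : Finset (Fin (n+2) × Fin (n+2) × Fin (n+2) × Fin (n+2))).filter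
        (fun p => (p.2.2.1 ≠ p.2.2.2 ∧ p.1 ≠ p.2.2.1 ∧ p.1 ≠ p.2.2.2 ∧ p.2.1 ≠ p.2.2.1 ∧
          p.2.1 ≠ p.2.2.2) ∧ p.1 ≠ p.2.1),
        (μ p.1 + μ p.2.1) * (μ p.2.2.1 + μ p.2.2.2))
      = (-2*m'^2 + 14*m' - 24)*Q + ((2*m'^2 - 14*m' + 24)*S)*S
        + ((6 - 2*m')*Q + (2*m' - 6)*S^2)*m' := by
    rw [Finset.sum_filter, flat4]
    rw [Finset.sum_congr rfl fun i _ => Finset.sum_congr rfl fun j _ => hstep4 i j]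
    have step1 : ∀ i : Fin (n+2),
        (∑ j, if j ≠ i then (2*m' - 6) * ((μ i + μ j) * (S - μ i - μ j)) else 0)
        = (-2*m'^2 + 14*m' - 24)*(μ i)^2 + ((2*m'^2 - 14*m' + 24)*S)*(μ i)
          + ((6 - 2*m')*Q + (2*m' - 6)*S^2) := by
      intro i
      rw [sum_ite_ne1,
        show (∑ j, (2*m' - 6) * ((μ i + μ j) * (S - μ i - μ j)))
          = ∑ j : Fin (n+2), ((-(2*m' - 6))*(μ j)^2 + ((2*m' - 6)*(S - 2*μ i))*μ j
            + ((2*m' - 6)*(μ i * S - (μ i)^2))) from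
          Finset.sum_congr rfl fun j _ => by ring,
        key]
      ring
    rw [Finset.sum_congr rfl fun i _ => step1 i, key]
  -- ===== final assembly =====
  have E1 : 8 * A = (-2*m'^2 + 14*m' - 24)*Q + ((2*m'^2 - 14*m' + 24)*S)*S
      + ((6 - 2*m')*Q + (2*m' - 6)*S^2)*m' := h8A.symm.trans hDval
  have E2 : 6 * B = (m'^2 - 9*m' + 18)*Q + ((4*m' - 12)*S)*S + ((2*m' - 6)*Q + 2*S^2)*m' :=
    h6B.symm.trans hYval
  rw [hm'] at E1 E2
  rw [Nat.cast_choose_two]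
  push_cast
  linear_combination E1 / 8 + E2 / 6
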